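/- Let G be a finite group, H a proper subgroup of G, and H₀ a normal subgroup of H. Then the cardinality of the union over all g ∈ G of the conjugates gH₀g⁻¹ is strictly less than |G|/[H:H₀]. -/

import Mathlib

lemma ncard_biUnion_le' {ι α : Type*} [Finite α] (t : Finset ι) (s : ι → Set α) :
    (⋃ i ∈ t, s i).ncard ≤ ∑ i ∈ t, (s i).ncard := by
  classical
  induction t using Finset.induction with
  | empty => simp
  | insert _ _ h ih =>
    rename_i a t
    rw [Finset.set_biUnion_insert, Finset.sum_insert h]
    exact le_trans (Set.ncard_union_le _ _) (by omega)

theorem card_union_conjugates_lt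
    (G : Type*) [Group G] [Fintype G] (H : Subgroup G) (hH : H ≠ ⊤)
    (H₀ : Subgroup G) (hle : H₀ ≤ H)
    (hnorm : ∀ h ∈ H, ∀ k ∈ H₀, h * k * h⁻¹ ∈ H₀) :
    (Set.ncard (⋃ g : G, (fun x => g * x * g⁻¹) '' (H₀ : Set G)) : ℝ) <
      (Fintype.card G : ℝ) / (H₀.relIndex H) := by
  classical
  set N := Subgroup.normalizer (H₀ : Set G) with hN
  have hHN : H ≤ N := by
    intro h hh
    rw [Subgroup.mem_normalizer_iff]
    intro k
    constructor
    · exact fun hk => hnorm h hh k hk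
    · intro hk
      have := hnorm h⁻¹ (H.inv_mem hh) _ hk
      simpa [mul_assoc] using this
  -- conjugation by elements of N fixes H₀ as a set
  have hconjN : ∀ n ∈ N, (fun x => n * x * n⁻¹) '' (H₀ : Set G) = (H₀ : Set G) := by
    intro n hn
    have hn' := (Subgroup.mem_normalizer_iff.mp hn)
    ext y
    constructor
    · rintro ⟨k, hk, rfl⟩
      exact (hn' k).mp hk
    · intro hy
      refine ⟨n⁻¹ * y * n, ?_, by group⟩
      have hn2 := (Subgroup.mem_normalizer_iff.mp (N.inv_mem hn)) y
      simpa using hn2.mp hy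
  -- the union is a union over cosets
  have hcoset : (⋃ g : G, (fun x => g * x * g⁻¹) '' (H₀ : Set G)) =
      ⋃ q : G ⧸ N, (fun x => q.out * x * q.out⁻¹) '' (H₀ : Set G) := by
    apply Set.Subset.antisymm
    · refine Set.iUnion_subset fun g => ?_
      have : (fun x => g * x * g⁻¹) '' (H₀ : Set G) =
          (fun x => (QuotientGroup.mk g : G ⧸ N).out * x *
            (QuotientGroup.mk g : G ⧸ N).out⁻¹) '' (H₀ : Set G) := by
        set g' := (QuotientGroup.mk g : G ⧸ N).out with hg'
        have hmem : g'⁻¹ * g ∈ N := by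
          rw [← QuotientGroup.eq]
          exact QuotientGroup.out_eq' _
        calc (fun x => g * x * g⁻¹) '' (H₀ : Set G)
            = (fun x => g' * x * g'⁻¹) '' ((fun x => (g'⁻¹*g) * x * (g'⁻¹*g)⁻¹) '' (H₀ : Set G)) := by
              rw [Set.image_image]
              apply Set.image_congr
              intro x _
              group
          _ = (fun x => g' * x * g'⁻¹) '' (H₀ : Set G) := by rw [hconjN _ hmem]
      rw [this]
      exact Set.subset_iUnion (fun q : G ⧸ N => (fun x => q.out * x * q.out⁻¹) '' (H₀ : Set G)) (QuotientGroup.mk g)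
    · exact Set.iUnion_subset fun q => Set.subset_iUnion
        (fun g : G => (fun x => g * x * g⁻¹) '' (H₀ : Set G)) q.out
  set S := ⋃ g : G, (fun x => g * x * g⁻¹) '' (H₀ : Set G) with hS
  have h1S : (1 : G) ∈ S := Set.mem_iUnion.mpr ⟨1, ⟨1, H₀.one_mem, by group⟩⟩
  -- counting
  set c := N.index with hc
  set h₀ := Nat.card H₀ with hh₀
  have hcardconj : ∀ g : G, ((fun x => g * x * g⁻¹) '' (H₀ : Set G)).ncard = h₀ := by
    intro g
    rw [Set.ncard_image_of_injective]
    · rw [← Nat.card_coe_set_eq, SetLike.coe_sort_coe]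
    · intro a b hab
      simpa using hab
  have honeconj : ∀ g : G, (1:G) ∈ (fun x => g * x * g⁻¹) '' (H₀ : Set G) :=
    fun g => ⟨1, H₀.one_mem, by group⟩
  have hSdiff : S \ {1} ⊆ ⋃ q : G ⧸ N, ((fun x => q.out * x * q.out⁻¹) '' (H₀ : Set G) \ {1}) := by
    rw [hcoset]
    rintro y ⟨hy, hy1⟩
    obtain ⟨q, hq⟩ := Set.mem_iUnion.mp hy
    exact Set.mem_iUnion.mpr ⟨q, hq, hy1⟩
  have hterm : ∀ q : G ⧸ N, ((fun x => q.out * x * q.out⁻¹) '' (H₀ : Set G) \ {1}).ncard = h₀ - 1 := by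
    intro q
    rw [Set.ncard_diff_singleton_of_mem (honeconj _), hcardconj]
  have hcount1 : (S \ {1}).ncard ≤ c * (h₀ - 1) := by
    refine le_trans (Set.ncard_le_ncard hSdiff (Set.toFinite _)) ?_
    have h2 := ncard_biUnion_le' (Finset.univ : Finset (G ⧸ N))
      (fun q => ((fun x => q.out * x * q.out⁻¹) '' (H₀ : Set G) \ {1}))
    simp only [Finset.mem_univ, Set.iUnion_true] at h2
    refine le_trans h2 ?_
    rw [Finset.sum_congr rfl (fun q _ => hterm q), Finset.sum_const, smul_eq_mul]
    have hcq : (Finset.univ : Finset (G ⧸ N)).card = c := by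
      rw [Finset.card_univ, hc, Subgroup.index, Nat.card_eq_fintype_card]
    rw [hcq]
  have hScard : S.ncard ≤ c * (h₀ - 1) + 1 := by
    have hsub : S ⊆ (S \ {1}) ∪ {1} := by
      intro x hx
      by_cases hx1 : x = 1 <;> simp [hx, hx1]
    calc S.ncard ≤ ((S \ {1}) ∪ {1}).ncard := Set.ncard_le_ncard hsub (Set.toFinite _)
      _ ≤ (S \ {1}).ncard + ({1} : Set G).ncard := Set.ncard_union_le _ _
      _ ≤ c * (h₀ - 1) + 1 := by rw [Set.ncard_singleton]; omega
  -- arithmetic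
  set r := H₀.relIndex H with hr
  set n := Nat.card G with hn'
  have hrh : r * h₀ = Nat.card H := by
    rw [hr, Subgroup.relIndex, hh₀,
      Nat.card_congr (Subgroup.subgroupOfEquivOfLe hle).toEquiv.symm, mul_comm,
      Subgroup.card_mul_index]
  have hrpos : 0 < r := by
    rcases Nat.eq_zero_or_pos r with h0 | h
    · exfalso
      have h2 := hrh
      rw [h0, zero_mul] at h2
      exact (Nat.card_pos (α := ↥H)).ne' h2.symm
    · exact h
  have h₀pos : 0 < h₀ := Nat.card_pos
  have hkey : S.ncard * r < n := by
    have hcN : c * Nat.card N = n := by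
      rw [hc, hn', mul_comm, Subgroup.card_mul_index]
    have hHleN : Nat.card H ≤ Nat.card N := Subgroup.card_le_of_le hHN
    rcases Nat.lt_or_ge c 2 with hc2 | hc2
    · -- c ≤ 1 ; in fact c = 1 since index ≠ 0
      have hc1 : c = 1 := by
        have : c ≠ 0 := Subgroup.index_ne_zero_of_finite
        omega
      have hHn : Nat.card H < n := by
        have hle' : Nat.card H ≤ n := Subgroup.card_le_card_group H
        rcases lt_or_eq_of_le hle' with h | h
        · exact h
        · exact absurd (Subgroup.eq_top_of_card_eq H (by rw [h, hn'])) hH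
      calc S.ncard * r ≤ (c * (h₀ - 1) + 1) * r := Nat.mul_le_mul_right r hScard
        _ ≤ h₀ * r := by rw [hc1, one_mul]; exact Nat.mul_le_mul_right r (by omega)
        _ = Nat.card H := by rw [mul_comm]; exact hrh
        _ < n := hHn
    · have hstep : c * (h₀ - 1) + 1 < c * h₀ := by
        rcases Nat.exists_eq_add_of_le h₀pos with ⟨k, hk⟩
        rw [hk]
        simp only [Nat.add_sub_cancel_left, Nat.mul_add]
        nlinarith
      calc S.ncard * r ≤ (c * (h₀ - 1) + 1) * r := Nat.mul_le_mul_right r hScard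
        _ < (c * h₀) * r := (Nat.mul_lt_mul_right hrpos).mpr hstep
        _ = c * (r * h₀) := by ring
        _ = c * Nat.card H := by rw [hrh]
        _ ≤ c * Nat.card N := Nat.mul_le_mul_left c hHleN
        _ = n := hcN
  rw [lt_div_iff₀ (by exact_mod_cast hrpos)]
  have : (Fintype.card G : ℕ) = n := by rw [hn', Nat.card_eq_fintype_card]
  rw [← this] at hkey
  exact_mod_cast hkey
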